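/- Let f ∈ L²([0,1]^D) with variance σ²(f) > 0, and let X = (x_1,…,x_n) consist of n independent points uniform on [0,1]^D, with F(X) = (1/n) ∑_{i=1}^n f(x_i). Then Var(F(X)) = σ²(f)/n, and the column-wise mean dimension of F equals the mean dimension of f: ∑_{k=1}^D [ (1/2) E( (F(X) − F(X̃_k))² ) ] / Var(F(X)) = ∑_{k=1}^D [ (1/2) E( (f(x) − f(x_{−k}:z_k))² ) ] / σ²(f), where X̃_k replaces the k-th coordinate of every row of X by independent uniform values, x is uniform on [0,1]^D, and x_{−k}:z_k replaces coordinate k of x by an independent uniform z_k. In the paper's notation, ν_MC(F) = ν_MC(f): under plain Monte Carlo, the column-wise mean dimension of the estimator coincides with the mean dimension of the integrand. -/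

import Mathlib

open MeasureTheory

/-- The uniform probability measure on the cube `[0,1]^D`. -/
noncomputable def cubeMeasure (D : ℕ) : Measure (Fin D → ℝ) :=
  Measure.pi fun _ => volume.restrict (Set.Icc (0 : ℝ) 1)

/-- The distribution of `n` i.i.d. points uniform on `[0,1]^D`. -/
noncomputable def ensembleMeasure (n D : ℕ) : Measure (Fin n → Fin D → ℝ) :=
  Measure.pi fun _ => cubeMeasure D

namespace Stmt7Aux

open Function Set ProbabilityTheory

instance : IsProbabilityMeasure (volume.restrict (Set.Icc (0:ℝ) 1)) :=
  ⟨by simp [Real.volume_Icc]⟩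

instance (D : ℕ) : IsProbabilityMeasure (cubeMeasure D) := by
  unfold cubeMeasure; infer_instance

instance (n D : ℕ) : IsProbabilityMeasure (ensembleMeasure n D) := by
  unfold ensembleMeasure; infer_instance

variable {ι : Type*} [Fintype ι] {α : Type*} [MeasurableSpace α]
  (κ : Measure α) [IsProbabilityMeasure κ]

theorem measurePreserving_eval (i : ι) :
    MeasurePreserving (fun w : ι → α => w i) (Measure.pi fun _ => κ) κ := by
  classical
  refine ⟨measurable_pi_apply i, ?_⟩
  ext s hs
  rw [Measure.map_apply (measurable_pi_apply i) hs]
  show (Measure.pi fun _ => κ) (Function.eval i ⁻¹' s) = κ s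
  rw [← Set.univ_pi_update_univ, Measure.pi_pi]
  rw [Finset.prod_eq_single i (fun j _ hj => by simp [Function.update_apply, hj]) (by simp)]
  simp

theorem indepFun_eval {i j : ι} (hij : i ≠ j) :
    IndepFun (fun w : ι → α => w i) (fun w : ι → α => w j) (Measure.pi fun _ => κ) := by
  classical
  rw [ProbabilityTheory.indepFun_iff_measure_inter_preimage_eq_mul]
  intro s t hs ht
  have h2 : ∀ (l : ι) (u : Set α), MeasurableSet u →
      (Measure.pi fun _ : ι => κ) ((fun w : ι → α => w l) ⁻¹' u) = κ u := fun l u hu => by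
    rw [← Measure.map_apply (measurable_pi_apply l) hu, (measurePreserving_eval κ l).map_eq]
  rw [h2 i s hs, h2 j t ht]
  have h1 : (fun w : ι → α => w i) ⁻¹' s ∩ (fun w : ι → α => w j) ⁻¹' t
      = Set.univ.pi (Function.update (Function.update (fun _ => (Set.univ : Set α)) i s) j t) := by
    ext w
    simp only [Set.mem_inter_iff, Set.mem_preimage, Set.mem_pi, Set.mem_univ, true_implies]
    constructor
    · rintro ⟨hw1, hw2⟩ l
      rcases eq_or_ne l j with rfl | hlj
      · simpa using hw2
      rcases eq_or_ne l i with rfl | hli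
      · simpa [Function.update_apply, hij] using hw1
      · simp [Function.update_apply, hlj, hli]
    · intro h
      refine ⟨?_, ?_⟩
      · have := h i; simpa [Function.update_apply, hij] using this
      · have := h j; simpa using this
  rw [h1, Measure.pi_pi]
  have hprod : ∀ l, κ (Function.update (Function.update (fun _ => (Set.univ : Set α)) i s) j t l)
      = Function.update (Function.update (fun _ => (1:ENNReal)) i (κ s)) j (κ t) l := by
    intro l
    rcases eq_or_ne l j with rfl | hlj
    · simp
    rcases eq_or_ne l i with rfl | hli
    · simp [Function.update_apply, hlj]
    · simp [Function.update_apply, hli, hlj]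
  simp_rw [hprod]
  rw [Finset.prod_update_of_mem (Finset.mem_univ j),
    Finset.prod_update_of_mem (Finset.mem_sdiff.2 ⟨Finset.mem_univ i, by simp [hij]⟩)]
  simp [mul_comm]

theorem measurePreserving_update' [DecidableEq ι] (k : ι) :
    MeasurePreserving (fun p : (ι → α) × α => Function.update p.1 k p.2)
      ((Measure.pi fun _ : ι => κ).prod κ) (Measure.pi fun _ : ι => κ) := by
  have hmeas : Measurable fun p : (ι → α) × α => Function.update p.1 k p.2 := by
    apply measurable_pi_lambda
    intro l
    rcases eq_or_ne l k with rfl | hlk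
    · simpa using measurable_snd
    · simpa [Function.update_apply, hlk, Function.comp_def] using (measurable_pi_apply l).comp measurable_fst
  refine ⟨hmeas, (Measure.pi_eq fun s hs => ?_).symm⟩
  rw [Measure.map_apply hmeas (MeasurableSet.univ_pi hs)]
  have hpre : (fun p : (ι → α) × α => Function.update p.1 k p.2) ⁻¹' Set.univ.pi s
      = (Set.univ.pi (Function.update s k Set.univ)) ×ˢ s k := by
    ext ⟨x, z⟩
    simp only [Set.mem_preimage, Set.mem_pi, Set.mem_univ, true_implies, Set.mem_prod]
    constructor
    · intro hmem
      refine ⟨fun l => ?_, by simpa using hmem k⟩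
      rcases eq_or_ne l k with rfl | hlk
      · simp
      · simpa [Function.update_apply, hlk] using hmem l
    · rintro ⟨hmem1, hmem2⟩ l
      rcases eq_or_ne l k with rfl | hlk
      · simpa using hmem2
      · have := hmem1 l; simpa [Function.update_apply, hlk] using this
  rw [hpre, Measure.prod_prod, Measure.pi_pi]
  have hupd : ∀ l, κ (Function.update s k Set.univ l)
      = Function.update (fun l => κ (s l)) k 1 l := by
    intro l
    rcases eq_or_ne l k with rfl | hlk
    · simp
    · simp [Function.update_apply, hlk]
  simp_rw [hupd]
  rw [Finset.prod_update_of_mem (Finset.mem_univ k), one_mul,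
    ← Finset.prod_eq_prod_diff_singleton_mul (Finset.mem_univ k) (fun l => κ (s l))]

theorem mc_mean_var {h : α → ℝ} (hmeas : Measurable h) (hh : MemLp h 2 κ)
    (n : ℕ) (hn : 0 < n) :
    (∫ w : Fin n → α, (1 / (n:ℝ)) * ∑ i, h (w i) ∂(Measure.pi fun _ : Fin n => κ))
      = ∫ x, h x ∂κ ∧
    (∫ w : Fin n → α, ((1 / (n:ℝ)) * ∑ i, h (w i) - ∫ x, h x ∂κ) ^ 2
        ∂(Measure.pi fun _ : Fin n => κ))
      = (∫ x, (h x - ∫ y, h y ∂κ) ^ 2 ∂κ) / n := by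
  set P : Measure (Fin n → α) := Measure.pi fun _ : Fin n => κ with hP
  have hnR : (n : ℝ) ≠ 0 := Nat.cast_ne_zero.2 hn.ne'
  have key : ∀ (g : α → ℝ), AEStronglyMeasurable g κ → ∀ i : Fin n,
      ∫ w, g (w i) ∂P = ∫ x, g x ∂κ := by
    intro g hg i
    have hmp := measurePreserving_eval (κ := κ) (ι := Fin n) i
    calc ∫ w, g (w i) ∂P
        = ∫ y, g y ∂(Measure.map (fun w : Fin n → α => w i) P) :=
          (integral_map hmp.measurable.aemeasurable (hmp.map_eq.symm ▸ hg)).symm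
      _ = ∫ x, g x ∂κ := by rw [hmp.map_eq]
  have hYmem : ∀ i : Fin n, MemLp (fun w : Fin n → α => h (w i)) 2 P := fun i => by
    simpa [Function.comp_def] using hh.comp_measurePreserving (measurePreserving_eval (κ := κ) i)
  have hYint : ∀ i : Fin n, Integrable (fun w : Fin n → α => h (w i)) P :=
    fun i => (hYmem i).integrable one_le_two
  set m := ∫ x, h x ∂κ with hm
  have hmean : (∫ w : Fin n → α, (1 / (n:ℝ)) * ∑ i, h (w i) ∂P) = m := by
    rw [integral_const_mul, integral_finset_sum _ fun i _ => hYint i]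
    have : ∀ i : Fin n, ∫ w, h (w i) ∂P = m := fun i => key h hmeas.aestronglyMeasurable i
    simp only [this, Finset.sum_const, Finset.card_univ, Fintype.card_fin, nsmul_eq_mul]
    field_simp
  refine ⟨hmean, ?_⟩
  -- variance computation
  set Z : (Fin n → α) → ℝ := fun w => (1 / (n:ℝ)) * ∑ i, h (w i) with hZ
  have hZmem : MemLp Z 2 P := by
    have : MemLp (fun w : Fin n → α => ∑ i, h (w i)) 2 P := by
      have := memLp_finset_sum' (μ := P) (p := (2:ENNReal)) Finset.univ
        (fun i (_ : i ∈ Finset.univ) => hYmem i)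
      have he : (∑ i : Fin n, fun w : Fin n → α => h (w i))
          = fun w : Fin n → α => ∑ i, h (w i) := by
        funext w; simp [Finset.sum_apply]
      simpa [he] using this
    simpa [hZ] using this.const_mul (1 / (n:ℝ))
  have hvarZ : (∫ w, (Z w - m) ^ 2 ∂P) = variance Z P := by
    rw [variance_eq_integral hZmem.aemeasurable]
    have hiz : ∫ x, Z x ∂P = m := hmean
    refine integral_congr_ae (Filter.Eventually.of_forall fun w => ?_)
    simp [hiz]
  have hvar_eval : ∀ i : Fin n, variance (fun w : Fin n → α => h (w i)) P = variance h κ := by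
    intro i
    rw [variance_eq_sub (hYmem i), variance_eq_sub hh]
    have h2 : (∫ w, ((fun w : Fin n → α => h (w i)) ^ 2) w ∂P) = ∫ x, (h ^ 2) x ∂κ := by
      simp only [Pi.pow_apply]
      exact key (fun x => h x ^ 2) ((hmeas.pow_const 2).aestronglyMeasurable) i
    have h1 : (∫ w, h (w i) ∂P) = ∫ x, h x ∂κ := key h hmeas.aestronglyMeasurable i
    rw [show (P[(fun w : Fin n → α => h (w i)) ^ 2]) = ∫ x, (h ^ 2) x ∂κ from h2, h1]
  have hsum : Z = ((1 / (n:ℝ)) • (∑ i : Fin n, fun w : Fin n → α => h (w i))) := by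
    funext w; simp [hZ, Finset.sum_apply]
  have hvarsum : variance (∑ i : Fin n, fun w : Fin n → α => h (w i)) P
      = ∑ i : Fin n, variance (fun w : Fin n → α => h (w i)) P := by
    refine IndepFun.variance_sum (fun i _ => hYmem i) ?_
    intro i _ j _ hij
    exact (indepFun_eval (κ := κ) hij).comp hmeas hmeas
  have hZvar : variance Z P = variance h κ / n := by
    rw [hsum, variance_smul, hvarsum]
    simp only [hvar_eval, Finset.sum_const, Finset.card_univ, Fintype.card_fin, nsmul_eq_mul]
    field_simp
  have hvarh : variance h κ = ∫ x, (h x - ∫ y, h y ∂κ) ^ 2 ∂κ := by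
    rw [variance_eq_integral hh.aemeasurable]
  rw [show (∫ w, ((1 / (n:ℝ)) * ∑ i, h (w i) - m) ^ 2 ∂P) = ∫ w, (Z w - m) ^ 2 ∂P from rfl,
    hvarZ, hZvar, hvarh]


end Stmt7Aux

/-- for `f ∈ L²([0,1]^D)` with `σ²(f) > 0` and the Monte Carlo
estimator `F(X) = (1/n)∑ᵢ f(xᵢ)` over `n` i.i.d. uniform points:
`Var(F(X)) = σ²(f)/n`, and the column-wise mean dimension of `F` (Jansen indices
of the `D` columns, normalized by `Var(F(X))`) equals the mean dimension of `f`
(Jansen indices of the `D` coordinates, normalized by `σ²(f)`):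
`ν_MC(F) = ν_MC(f)`. -/
theorem stmt_7 {D : ℕ} (f : (Fin D → ℝ) → ℝ) (hf : MemLp f 2 (cubeMeasure D))
    (hσ : 0 < ∫ x, (f x - ∫ y, f y ∂cubeMeasure D) ^ 2 ∂cubeMeasure D)
    (n : ℕ) (hn : 0 < n) :
    (∫ X : Fin n → Fin D → ℝ,
        ((1 / (n : ℝ)) * ∑ i, f (X i) -
          ∫ X' : Fin n → Fin D → ℝ, (1 / (n : ℝ)) * ∑ i, f (X' i)
            ∂ensembleMeasure n D) ^ 2 ∂ensembleMeasure n D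
      = (∫ x, (f x - ∫ y, f y ∂cubeMeasure D) ^ 2 ∂cubeMeasure D) / n) ∧
    ((∑ k : Fin D, (1 / 2) *
          ∫ X : Fin n → Fin D → ℝ,
            (∫ z : Fin n → ℝ,
              ((1 / (n : ℝ)) * ∑ i, f (X i) -
                (1 / (n : ℝ)) * ∑ i, f (Function.update (X i) k (z i))) ^ 2
              ∂(Measure.pi fun _ : Fin n => volume.restrict (Set.Icc (0 : ℝ) 1)))
            ∂ensembleMeasure n D) /
        (∫ X : Fin n → Fin D → ℝ,
          ((1 / (n : ℝ)) * ∑ i, f (X i) -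
            ∫ X' : Fin n → Fin D → ℝ, (1 / (n : ℝ)) * ∑ i, f (X' i)
              ∂ensembleMeasure n D) ^ 2 ∂ensembleMeasure n D)
      = (∑ k : Fin D, (1 / 2) *
            ∫ x, (∫ z in Set.Icc (0 : ℝ) 1, (f x - f (Function.update x k z)) ^ 2)
              ∂cubeMeasure D) /
          ∫ x, (f x - ∫ y, f y ∂cubeMeasure D) ^ 2 ∂cubeMeasure D) := by
  
  classical
  have hnR : (n : ℝ) ≠ 0 := Nat.cast_ne_zero.2 hn.ne'
  obtain ⟨f', hf'meas, hff'⟩ : ∃ f' : (Fin D → ℝ) → ℝ,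
      Measurable f' ∧ f =ᵐ[cubeMeasure D] f' :=
    ⟨hf.1.mk f, hf.1.stronglyMeasurable_mk.measurable, hf.1.ae_eq_mk⟩
  have hf' : MemLp f' 2 (cubeMeasure D) := hf.ae_eq hff'
  have hm : (∫ y, f y ∂cubeMeasure D) = ∫ y, f' y ∂cubeMeasure D := integral_congr_ae hff'
  have hσeq : (∫ x, (f x - ∫ y, f y ∂cubeMeasure D) ^ 2 ∂cubeMeasure D)
      = ∫ x, (f' x - ∫ y, f' y ∂cubeMeasure D) ^ 2 ∂cubeMeasure D := by
    rw [← hm]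
    exact integral_congr_ae (hff'.mono fun x hx => by simp only [hx])
  have hmc := Stmt7Aux.mc_mean_var (cubeMeasure D) hf'meas hf' n hn
  -- transfer the estimator sum along a.e. equality
  have haeeval : ∀ i : Fin n,
      (fun X : Fin n → Fin D → ℝ => f (X i)) =ᵐ[ensembleMeasure n D]
        (fun X => f' (X i)) := fun i => by
    simpa [Function.comp_def, ensembleMeasure] using
      (Stmt7Aux.measurePreserving_eval (cubeMeasure D) (ι := Fin n) i).quasiMeasurePreserving.ae_eq_comp hff'
  have hsum_ae : (fun X : Fin n → Fin D → ℝ => (1 / (n:ℝ)) * ∑ i, f (X i))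
      =ᵐ[ensembleMeasure n D] fun X => (1 / (n:ℝ)) * ∑ i, f' (X i) := by
    filter_upwards [ae_all_iff.2 haeeval] with X hX
    exact congrArg _ (Finset.sum_congr rfl fun i _ => hX i)
  have hinner : (∫ X' : Fin n → Fin D → ℝ, (1 / (n:ℝ)) * ∑ i, f (X' i) ∂ensembleMeasure n D)
      = ∫ x, f' x ∂cubeMeasure D := by
    rw [integral_congr_ae hsum_ae]; exact hmc.1
  have hVar : (∫ X : Fin n → Fin D → ℝ,
        ((1 / (n : ℝ)) * ∑ i, f (X i) -
          ∫ X' : Fin n → Fin D → ℝ, (1 / (n : ℝ)) * ∑ i, f (X' i)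
            ∂ensembleMeasure n D) ^ 2 ∂ensembleMeasure n D)
      = (∫ x, (f x - ∫ y, f y ∂cubeMeasure D) ^ 2 ∂cubeMeasure D) / n := by
    rw [hinner, hσeq]
    calc ∫ X : Fin n → Fin D → ℝ,
          ((1 / (n:ℝ)) * ∑ i, f (X i) - ∫ x, f' x ∂cubeMeasure D) ^ 2 ∂ensembleMeasure n D
        = ∫ X : Fin n → Fin D → ℝ,
            ((1 / (n:ℝ)) * ∑ i, f' (X i) - ∫ x, f' x ∂cubeMeasure D) ^ 2 ∂ensembleMeasure n D := by
          refine integral_congr_ae ?_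
          filter_upwards [hsum_ae] with X hX
          simp only [hX]
      _ = _ := hmc.2
  refine ⟨hVar, ?_⟩
  -- notation shortcuts
  have hfstμν : MeasurePreserving (Prod.fst)
      ((cubeMeasure D).prod (volume.restrict (Set.Icc (0:ℝ) 1))) (cubeMeasure D) :=
    ⟨measurable_fst, by simp⟩
  have hfstPΛ : MeasurePreserving (Prod.fst)
      ((ensembleMeasure n D).prod (Measure.pi fun _ : Fin n => volume.restrict (Set.Icc (0:ℝ) 1)))
      (ensembleMeasure n D) :=
    ⟨measurable_fst, by simp⟩
  have hJansen : ∀ k : Fin D,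
      (∫ X : Fin n → Fin D → ℝ,
            (∫ z : Fin n → ℝ,
              ((1 / (n : ℝ)) * ∑ i, f (X i) -
                (1 / (n : ℝ)) * ∑ i, f (Function.update (X i) k (z i))) ^ 2
              ∂(Measure.pi fun _ : Fin n => volume.restrict (Set.Icc (0 : ℝ) 1)))
            ∂ensembleMeasure n D)
        = (∫ x, (∫ z in Set.Icc (0 : ℝ) 1, (f x - f (Function.update x k z)) ^ 2)
              ∂cubeMeasure D) / n := by
    intro k
    set ν : Measure ℝ := volume.restrict (Set.Icc (0:ℝ) 1) with hνdef
    set g' : (Fin D → ℝ) × ℝ → ℝ :=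
      fun p => f' p.1 - f' (Function.update p.1 k p.2) with hg'def
    have hu : MeasurePreserving (fun p : (Fin D → ℝ) × ℝ => Function.update p.1 k p.2)
        ((cubeMeasure D).prod ν) (cubeMeasure D) := Stmt7Aux.measurePreserving_update' ν k
    have hg'meas : Measurable g' :=
      (hf'meas.comp measurable_fst).sub (hf'meas.comp hu.measurable)
    have hg'mem : MemLp g' 2 ((cubeMeasure D).prod ν) := by
      simpa [Function.comp_def, hg'def, Pi.sub_def] using
        (hf'.comp_measurePreserving hfstμν).sub (hf'.comp_measurePreserving hu)
    have keyP : ∀ (T : (Fin D → ℝ) × ℝ → (Fin D → ℝ)),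
        MeasurePreserving T ((cubeMeasure D).prod ν) (cubeMeasure D) →
        ∀ (g : (Fin D → ℝ) → ℝ), AEStronglyMeasurable g (cubeMeasure D) →
        (∫ p, g (T p) ∂((cubeMeasure D).prod ν)) = ∫ x, g x ∂cubeMeasure D := by
      intro T hT g hg
      calc (∫ p, g (T p) ∂((cubeMeasure D).prod ν))
          = ∫ y, g y ∂(Measure.map T ((cubeMeasure D).prod ν)) :=
            (integral_map hT.measurable.aemeasurable (hT.map_eq.symm ▸ hg)).symm
        _ = _ := by rw [hT.map_eq]
    have hint1 : Integrable (fun p : (Fin D → ℝ) × ℝ => f' p.1) ((cubeMeasure D).prod ν) := by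
      simpa [Function.comp_def] using
        (hf'.comp_measurePreserving hfstμν).integrable one_le_two
    have hint2 : Integrable (fun p : (Fin D → ℝ) × ℝ => f' (Function.update p.1 k p.2))
        ((cubeMeasure D).prod ν) := by
      simpa [Function.comp_def] using (hf'.comp_measurePreserving hu).integrable one_le_two
    have hg'zero : (∫ p, g' p ∂((cubeMeasure D).prod ν)) = 0 := by
      rw [hg'def]
      rw [integral_sub hint1 hint2]
      rw [keyP Prod.fst hfstμν f' hf'.1,
        keyP _ hu f' hf'.1, sub_self]
    -- the product-arrow equivalence
    set e := MeasurableEquiv.arrowProdEquivProdArrow (Fin D → ℝ) ℝ (Fin n) with hedef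
    have he : MeasurePreserving e
        (Measure.pi fun _ : Fin n => (cubeMeasure D).prod ν)
        ((ensembleMeasure n D).prod (Measure.pi fun _ : Fin n => ν)) :=
      measurePreserving_arrowProdEquivProdArrow _ _ _ (fun _ => cubeMeasure D) (fun _ => ν)
    set H : (Fin n → Fin D → ℝ) × (Fin n → ℝ) → ℝ :=
      fun q => ((1 / (n:ℝ)) * ∑ i, g' (q.1 i, q.2 i)) ^ 2 with hHdef
    have hHmeas : Measurable H := by
      apply Measurable.pow_const
      apply Measurable.const_mul
      exact Finset.measurable_sum _ fun i _ =>
        hg'meas.comp (((measurable_pi_apply i).comp measurable_fst).prodMk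
          ((measurable_pi_apply i).comp measurable_snd))
    have hHeW : (H ∘ e) = fun w : Fin n → (Fin D → ℝ) × ℝ =>
        ((1 / (n:ℝ)) * ∑ i, g' (w i)) ^ 2 := by
      funext w
      simp [hHdef, hedef, MeasurableEquiv.arrowProdEquivProdArrow,
        Equiv.arrowProdEquivProdArrow, Function.comp]
    have hg'evalmem : ∀ i : Fin n,
        MemLp (fun w : Fin n → (Fin D → ℝ) × ℝ => g' (w i)) 2
          (Measure.pi fun _ : Fin n => (cubeMeasure D).prod ν) := fun i => by
      simpa [Function.comp_def] using
        hg'mem.comp_measurePreserving (Stmt7Aux.measurePreserving_eval ((cubeMeasure D).prod ν) i)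
    have hZgmem : MemLp (fun w : Fin n → (Fin D → ℝ) × ℝ => (1 / (n:ℝ)) * ∑ i, g' (w i)) 2
        (Measure.pi fun _ : Fin n => (cubeMeasure D).prod ν) := by
      have hs := memLp_finset_sum' (μ := Measure.pi fun _ : Fin n => (cubeMeasure D).prod ν)
        (p := (2:ENNReal)) Finset.univ
        (fun i (_ : i ∈ Finset.univ) => hg'evalmem i)
      have he2 : (∑ i : Fin n, fun w : Fin n → (Fin D → ℝ) × ℝ => g' (w i))
          = fun w : Fin n → (Fin D → ℝ) × ℝ => ∑ i, g' (w i) := by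
        funext w; simp
      rw [he2] at hs
      simpa using hs.const_mul (1 / (n:ℝ))
    have hWint : Integrable (H ∘ e) (Measure.pi fun _ : Fin n => (cubeMeasure D).prod ν) := by
      rw [hHeW]
      simpa using hZgmem.integrable_sq
    have hHint : Integrable H
        ((ensembleMeasure n D).prod (Measure.pi fun _ : Fin n => ν)) := by
      rw [← he.map_eq,
        integrable_map_measure hHmeas.aestronglyMeasurable e.measurable.aemeasurable]
      exact hWint
    have hmcg := Stmt7Aux.mc_mean_var ((cubeMeasure D).prod ν) hg'meas hg'mem n hn
    have hHval : (∫ q, H q ∂((ensembleMeasure n D).prod (Measure.pi fun _ : Fin n => ν)))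
        = (∫ p, g' p ^ 2 ∂((cubeMeasure D).prod ν)) / n := by
      calc (∫ q, H q ∂((ensembleMeasure n D).prod (Measure.pi fun _ : Fin n => ν)))
          = ∫ w, (H ∘ e) w ∂(Measure.pi fun _ : Fin n => (cubeMeasure D).prod ν) := by
            rw [← he.map_eq, integral_map e.measurable.aemeasurable hHmeas.aestronglyMeasurable]
            rfl
        _ = ∫ w : Fin n → (Fin D → ℝ) × ℝ, ((1 / (n:ℝ)) * ∑ i, g' (w i) - 0) ^ 2
              ∂(Measure.pi fun _ : Fin n => (cubeMeasure D).prod ν) := by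
            rw [hHeW]; simp
        _ = (∫ p, (g' p - 0) ^ 2 ∂((cubeMeasure D).prod ν)) / n := by
            have h2 := hmcg.2
            rw [hg'zero] at h2
            exact h2
        _ = (∫ p, g' p ^ 2 ∂((cubeMeasure D).prod ν)) / n := by simp
    -- a.e. transfer from f to f' on the ensemble side
    have haeA : ∀ i : Fin n,
        (fun q : (Fin n → Fin D → ℝ) × (Fin n → ℝ) => f (q.1 i))
          =ᵐ[(ensembleMeasure n D).prod (Measure.pi fun _ : Fin n => ν)]
        (fun q => f' (q.1 i)) := fun i => by
      have hmp : MeasurePreserving (fun q : (Fin n → Fin D → ℝ) × (Fin n → ℝ) => q.1 i)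
          ((ensembleMeasure n D).prod (Measure.pi fun _ : Fin n => ν)) (cubeMeasure D) := by
        have := (Stmt7Aux.measurePreserving_eval (cubeMeasure D) (ι := Fin n) i).comp hfstPΛ
        simpa [Function.comp_def] using this
      simpa [Function.comp_def] using hmp.quasiMeasurePreserving.ae_eq_comp hff'
    have haeB : ∀ i : Fin n,
        (fun q : (Fin n → Fin D → ℝ) × (Fin n → ℝ) => f (Function.update (q.1 i) k (q.2 i)))
          =ᵐ[(ensembleMeasure n D).prod (Measure.pi fun _ : Fin n => ν)]
        (fun q => f' (Function.update (q.1 i) k (q.2 i))) := fun i => by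
      have hmp : MeasurePreserving
          (fun q : (Fin n → Fin D → ℝ) × (Fin n → ℝ) => Function.update (q.1 i) k (q.2 i))
          ((ensembleMeasure n D).prod (Measure.pi fun _ : Fin n => ν)) (cubeMeasure D) := by
        have h1 : MeasurePreserving
            (Prod.map (fun X : Fin n → Fin D → ℝ => X i) (fun z : Fin n → ℝ => z i))
            ((ensembleMeasure n D).prod (Measure.pi fun _ : Fin n => ν))
            ((cubeMeasure D).prod ν) :=
          (Stmt7Aux.measurePreserving_eval (cubeMeasure D) i).prod (Stmt7Aux.measurePreserving_eval ν i)
        have := hu.comp h1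
        simpa [Function.comp_def, Prod.map] using this
      simpa [Function.comp_def] using hmp.quasiMeasurePreserving.ae_eq_comp hff'
    have hae : ∀ᵐ q ∂((ensembleMeasure n D).prod (Measure.pi fun _ : Fin n => ν)),
        ((1 / (n : ℝ)) * ∑ i, f (q.1 i) -
            (1 / (n : ℝ)) * ∑ i, f (Function.update (q.1 i) k (q.2 i))) ^ 2
          = H q := by
      filter_upwards [ae_all_iff.2 haeA, ae_all_iff.2 haeB] with q h1 h2
      rw [Finset.sum_congr rfl fun i _ => h1 i, Finset.sum_congr rfl fun i _ => h2 i,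
        hHdef, ← mul_sub, ← Finset.sum_sub_distrib]
    have hiter : (∫ X : Fin n → Fin D → ℝ,
          (∫ z : Fin n → ℝ,
            ((1 / (n : ℝ)) * ∑ i, f (X i) -
              (1 / (n : ℝ)) * ∑ i, f (Function.update (X i) k (z i))) ^ 2
            ∂(Measure.pi fun _ : Fin n => ν)) ∂ensembleMeasure n D)
        = ∫ q, H q ∂((ensembleMeasure n D).prod (Measure.pi fun _ : Fin n => ν)) := by
      rw [integral_prod H hHint]
      refine integral_congr_ae ?_
      filter_upwards [Measure.ae_ae_of_ae_prod hae] with X hX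
      exact integral_congr_ae hX
    -- RHS identification
    have hg'sqint : Integrable (fun p => g' p ^ 2) ((cubeMeasure D).prod ν) :=
      hg'mem.integrable_sq
    have haeμν : ∀ᵐ p ∂((cubeMeasure D).prod ν),
        (f p.1 - f (Function.update p.1 k p.2)) ^ 2 = g' p ^ 2 := by
      have a := hfstμν.quasiMeasurePreserving.ae_eq_comp hff'
      have b := hu.quasiMeasurePreserving.ae_eq_comp hff'
      filter_upwards [a, b] with p h1 h2
      simp only [Function.comp_apply] at h1 h2
      rw [hg'def, h1, h2]
    have hRHS : (∫ x, (∫ z in Set.Icc (0 : ℝ) 1, (f x - f (Function.update x k z)) ^ 2)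
          ∂cubeMeasure D) = ∫ p, g' p ^ 2 ∂((cubeMeasure D).prod ν) := by
      rw [integral_prod _ hg'sqint]
      refine integral_congr_ae ?_
      filter_upwards [Measure.ae_ae_of_ae_prod haeμν] with x hx
      exact integral_congr_ae hx
    rw [hiter, hHval, hRHS]
  -- final arithmetic
  rw [hVar, Finset.sum_congr rfl fun k _ => by rw [hJansen k]]
  have hsumdiv : (∑ k : Fin D, (1 / 2 : ℝ) *
        ((∫ x, (∫ z in Set.Icc (0 : ℝ) 1, (f x - f (Function.update x k z)) ^ 2)
          ∂cubeMeasure D) / n))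
      = (∑ k : Fin D, (1 / 2 : ℝ) *
          (∫ x, (∫ z in Set.Icc (0 : ℝ) 1, (f x - f (Function.update x k z)) ^ 2)
            ∂cubeMeasure D)) / n := by
    rw [Finset.sum_div]
    exact Finset.sum_congr rfl fun k _ => by ring
  rw [hsumdiv, div_div_div_cancel_right₀ hnR]
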